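/- Let A = {a_1,...,a_n} ⊂ ℕ^d and C = f_A((0,1)^d) the open toric cube, with dim(C) = k. Then there exists a subset J ⊆ {1,...,n} with |J| = k such that the orthogonal projection of C to the coordinate subspace spanned by the coordinates in J is injective on C and has open image; i.e., C is the graph of a continuous map defined on an open subset of ℝ^k. -/

import Mathlib

open MeasureTheory Matrix

/-- The monomial map `f_A`. -/
def monomialMap {d n : ℕ} (a : Fin n → Fin d → ℕ) (t : Fin d → ℝ) : Fin n → ℝ :=
  fun i => ∏ j, t j ^ a i j

/-- The open unit cube `(0,1)^d`. -/
def openUnitCube (d : ℕ) : Set (Fin d → ℝ) := Set.pi Set.univ fun _ => Set.Ioo (0 : ℝ) 1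

/-- Projection to the coordinates in `J`. -/
def projTo {n : ℕ} (J : Finset (Fin n)) (x : Fin n → ℝ) : J → ℝ := fun j => x j

lemma mem_toricCube_iff {d n : ℕ} (a : Fin n → Fin d → ℕ) (x : Fin n → ℝ) :
    x ∈ monomialMap a '' openUnitCube d ↔
      ∃ s : Fin d → ℝ, (∀ j, s j < 0) ∧
        ∀ i, x i = Real.exp ((fun j => (a i j : ℝ)) ⬝ᵥ s) := by
  constructor
  · rintro ⟨t, ht, rfl⟩
    refine ⟨fun j => Real.log (t j), fun j => ?_, fun i => ?_⟩
    · exact Real.log_neg (ht j (Set.mem_univ j)).1 (ht j (Set.mem_univ j)).2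
    · rw [dotProduct, Real.exp_sum, monomialMap]
      refine Finset.prod_congr rfl fun j _ => ?_
      rw [mul_comm, Real.exp_mul, Real.exp_log (ht j (Set.mem_univ j)).1,
        Real.rpow_natCast]
  · rintro ⟨s, hs, hx⟩
    refine ⟨fun j => Real.exp (s j), fun j _ => ⟨Real.exp_pos _, Real.exp_lt_one_iff.2 (hs j)⟩, ?_⟩
    funext i
    rw [hx i, dotProduct, Real.exp_sum, monomialMap]
    refine Finset.prod_congr rfl fun j _ => ?_
    rw [← Real.exp_nat_mul]

/-- If the open toric cube `C` has dimension `k`, then there is a set `J` of `k`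
coordinates such that the projection of `C` to the `J`-coordinates is injective with open
image, and `C` is the graph of a continuous map over this image: `C` is the graph of a
continuous map defined on an open subset of `ℝ^k`. -/
theorem openToricCube_is_graph {d n k : ℕ} (a : Fin n → Fin d → ℕ)
    (hdim : dimH (monomialMap a '' openUnitCube d) = k) :
    ∃ J : Finset (Fin n), J.card = k ∧
      Set.InjOn (projTo J) (monomialMap a '' openUnitCube d) ∧
      IsOpen (projTo J '' (monomialMap a '' openUnitCube d)) ∧
      ∃ g : (J → ℝ) → (Fin n → ℝ),
        ContinuousOn g (projTo J '' (monomialMap a '' openUnitCube d)) ∧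
        ∀ x ∈ monomialMap a '' openUnitCube d, g (projTo J x) = x := by
  classical
  set C := monomialMap a '' openUnitCube d with hCdef
  set R : Fin n → Fin d → ℝ := fun i j => (a i j : ℝ) with hRdef
  have hmemC : ∀ x, x ∈ C ↔ ∃ s : Fin d → ℝ, (∀ j, s j < 0) ∧
      ∀ i, x i = Real.exp (R i ⬝ᵥ s) := fun x => mem_toricCube_iff a x
  -- choose a linearly independent spanning subfamily of the rows
  obtain ⟨b, hb_sub, hb_span, hb_ind⟩ := exists_linearIndependent ℝ (Set.range R)
  have hb_fin : b.Finite := (Set.finite_range R).subset hb_sub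
  haveI : Fintype b := hb_fin.fintype
  have hpick : ∀ v : b, ∃ i, R i = (v : Fin d → ℝ) := fun v => hb_sub v.2
  choose pick hpickspec using hpick
  set J : Finset (Fin n) := Finset.image pick Finset.univ with hJdef
  have hmemJ : ∀ v : b, pick v ∈ J := fun v => Finset.mem_image.2 ⟨v, Finset.mem_univ _, rfl⟩
  set e : b → J := fun v => ⟨pick v, hmemJ v⟩ with hedef
  have he_bij : Function.Bijective e := by
    constructor
    · intro v w h
      have h' : pick v = pick w := congrArg Subtype.val h
      apply Subtype.ext
      rw [← hpickspec v, ← hpickspec w, h']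
    · rintro ⟨j, hj⟩
      obtain ⟨v, -, hv⟩ := Finset.mem_image.1 hj
      exact ⟨v, Subtype.ext hv⟩
  set E : b ≃ J := Equiv.ofBijective e he_bij with hEdef
  set wJ : J → (Fin d → ℝ) := fun j => R j with hwJdef
  have hwJ_e : ∀ v : b, wJ (E v) = (v : Fin d → ℝ) := fun v => hpickspec v
  have hrange : Set.range wJ = b := by
    ext u
    constructor
    · rintro ⟨j, rfl⟩
      obtain ⟨v, rfl⟩ := E.surjective j
      rw [hwJ_e]; exact v.2
    · intro hu; exact ⟨E ⟨u, hu⟩, hwJ_e _⟩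
  have hwJ_ind : LinearIndependent ℝ wJ := by
    have h1 : LinearIndependent ℝ (fun v : b => wJ (E v)) := by
      simp only [hwJ_e]; exact hb_ind
    have h2 := h1.comp E.symm E.symm.injective
    have : (fun v : b => wJ (E v)) ∘ E.symm = wJ := by
      funext j; simp
    rwa [this] at h2
  -- coefficients expressing every row in terms of rows in `J`
  have hmem : ∀ i, R i ∈ Submodule.span ℝ (Set.range wJ) := by
    intro i
    rw [hrange, hb_span]
    exact Submodule.subset_span (Set.mem_range_self i)
  have hc : ∀ i, ∃ c : J → ℝ, ∑ j : J, c j • wJ j = R i := fun i =>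
    (Submodule.mem_span_range_iff_exists_fun ℝ).1 (hmem i)
  choose c hcspec using hc
  have key : ∀ (sv : Fin d → ℝ) (i : Fin n),
      R i ⬝ᵥ sv = ∑ j : J, c i j * (R j ⬝ᵥ sv) := by
    intro sv i
    conv_lhs => rw [← hcspec i]
    simp only [dotProduct, Finset.sum_apply, Pi.smul_apply, smul_eq_mul,
      Finset.sum_mul, Finset.mul_sum]
    rw [Finset.sum_comm]
    simp [mul_assoc]
    rfl
  -- injectivity
  have hinj : Set.InjOn (projTo J) C := by
    rintro x hx y hy hxy
    obtain ⟨s, hs, hxs⟩ := (hmemC x).1 hx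
    obtain ⟨s', hs', hys⟩ := (hmemC y).1 hy
    have hJeq : ∀ j : J, R j ⬝ᵥ s = R j ⬝ᵥ s' := by
      intro j
      have h := congrFun hxy j
      have h' : x (j : Fin n) = y (j : Fin n) := h
      rw [hxs (j : Fin n), hys (j : Fin n)] at h'
      exact Real.exp_injective h'
    funext i
    rw [hxs i, hys i, key s i, key s' i]
    congr 1
    exact Finset.sum_congr rfl fun j _ => by rw [hJeq j]
  -- the linear map to the J-coordinates
  set N : Matrix J (Fin d) ℝ := Matrix.of fun j => R j with hNdef
  set Φ := N.mulVecLin with hΦdef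
  have hΦapp : ∀ (sv : Fin d → ℝ) (j : J), Φ sv j = R j ⬝ᵥ sv := fun _ _ => rfl
  have hNT_inj : Function.Injective Nᵀ.mulVec := by
    rw [Matrix.mulVec_injective_iff]
    exact hwJ_ind
  have hNrank : N.rank = J.card := by
    rw [← Matrix.rank_transpose, Matrix.rank]
    rw [LinearMap.finrank_range_of_inj hNT_inj]
    simp [Module.finrank_pi]
  have hΦsurj : Function.Surjective Φ := by
    rw [← LinearMap.range_eq_top]
    apply Submodule.eq_top_of_finrank_eq
    have h1 : Module.finrank ℝ (LinearMap.range Φ) = N.rank := rfl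
    rw [h1, hNrank]
    simp [Module.finrank_pi]
  -- open image
  set negO : Set (Fin d → ℝ) := Set.pi Set.univ fun _ => Set.Iio (0:ℝ) with hnegOdef
  have hnegO_open : IsOpen negO := isOpen_set_pi Set.finite_univ fun _ _ => isOpen_Iio
  have hnegO_mem : ∀ s : Fin d → ℝ, s ∈ negO ↔ ∀ j, s j < 0 := by
    intro s; simp [hnegOdef, Set.mem_pi]
  set W : Set (J → ℝ) := Φ '' negO with hWdef
  have hWopen : IsOpen W := by
    have hmap := (LinearMap.toContinuousLinearMap Φ).isOpenMap ?_ negO hnegO_open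
    · simpa using hmap
    · simpa using hΦsurj
  set P : Set (J → ℝ) := Set.pi Set.univ fun _ => Set.Ioi (0:ℝ) with hPdef
  have hPopen : IsOpen P := isOpen_set_pi Set.finite_univ fun _ _ => isOpen_Ioi
  have hP_mem : ∀ y : J → ℝ, y ∈ P ↔ ∀ j, 0 < y j := by
    intro y; simp [hPdef, Set.mem_pi]
  set Lg : (J → ℝ) → (J → ℝ) := fun y j => Real.log (y j) with hLgdef
  have himg : projTo J '' C = P ∩ Lg ⁻¹' W := by
    ext y
    constructor
    · rintro ⟨x, hx, rfl⟩
      obtain ⟨s, hs, hxs⟩ := (hmemC x).1 hx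
      have hpos : ∀ j : J, 0 < x (j : Fin n) := by
        intro j; rw [hxs (j : Fin n)]; exact Real.exp_pos _
      refine ⟨(hP_mem _).2 fun j => hpos j, ?_⟩
      refine ⟨s, (hnegO_mem s).2 hs, ?_⟩
      funext j
      rw [hΦapp]
      show R (j : Fin n) ⬝ᵥ s = Real.log (x (j : Fin n))
      rw [hxs (j : Fin n), Real.log_exp]
    · rintro ⟨hyP, s, hsneg, hys⟩
      refine ⟨fun i => Real.exp (R i ⬝ᵥ s),
        (hmemC _).2 ⟨s, fun j => (hnegO_mem s).1 hsneg j, fun i => rfl⟩, ?_⟩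
      funext j
      show Real.exp (R (j : Fin n) ⬝ᵥ s) = y j
      have h1 : Φ s j = Real.log (y j) := congrFun hys j
      rw [hΦapp] at h1
      rw [h1, Real.exp_log ((hP_mem y).1 hyP j)]
  have hLg_cont : ContinuousOn Lg P := by
    refine continuousOn_pi.2 fun j => ?_
    refine Real.continuousOn_log.comp (continuous_apply (j : J)).continuousOn ?_
    intro y hy
    exact ne_of_gt ((hP_mem y).1 hy j)
  have hopen : IsOpen (projTo J '' C) := by
    rw [himg]
    exact hLg_cont.isOpen_inter_preimage hPopen hWopen
  -- the graph map
  set g : (J → ℝ) → (Fin n → ℝ) :=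
    fun y i => Real.exp (∑ j : J, c i j * Real.log (y j)) with hgdef
  have hg_id : ∀ x ∈ C, g (projTo J x) = x := by
    intro x hx
    obtain ⟨s, hs, hxs⟩ := (hmemC x).1 hx
    funext i
    show Real.exp (∑ j : J, c i j * Real.log (x (j : Fin n))) = x i
    rw [hxs i, key s i]
    congr 1
    exact Finset.sum_congr rfl fun j _ => by rw [hxs (j : Fin n), Real.log_exp]
  have hgP : ContinuousOn g P := by
    refine continuousOn_pi.2 fun i => ?_
    refine Real.continuous_exp.comp_continuousOn ?_
    refine continuousOn_finset_sum Finset.univ fun j _ => ?_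
    refine continuousOn_const.mul ?_
    refine Real.continuousOn_log.comp (continuous_apply (j : J)).continuousOn ?_
    intro y hy
    exact ne_of_gt ((hP_mem y).1 hy j)
  have hgC : ContinuousOn g (projTo J '' C) := by
    refine hgP.mono ?_
    rw [himg]; exact Set.inter_subset_left
  -- dimension computation
  have hproj_lip : LipschitzWith 1 (projTo J) := by
    apply LipschitzWith.of_dist_le_mul
    intro x y
    simp only [NNReal.coe_one, one_mul]
    refine (dist_pi_le_iff dist_nonneg).2 fun j => ?_
    exact dist_le_pi_dist x y (j : Fin n)
  have hCne : C.Nonempty := by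
    refine ⟨fun i => Real.exp (R i ⬝ᵥ fun _ => -1),
      (hmemC _).2 ⟨fun _ => -1, fun j => by norm_num, fun i => rfl⟩⟩
  have himg_ne : (projTo J '' C).Nonempty := hCne.image _
  have hdimU : dimH (projTo J '' C) = (J.card : ENNReal) := by
    obtain ⟨y, hy⟩ := himg_ne
    rw [Real.dimH_of_mem_nhds (hopen.mem_nhds hy)]
    simp [Module.finrank_pi]
  have hdim_le : dimH (projTo J '' C) ≤ dimH C := hproj_lip.dimH_image_le C
  have hCeq : C = g '' (projTo J '' C) := by
    ext x
    constructor
    · intro hx; exact ⟨projTo J x, Set.mem_image_of_mem _ hx, hg_id x hx⟩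
    · rintro ⟨y, ⟨x', hx', rfl⟩, rfl⟩
      rw [hg_id x' hx']; exact hx'
  have hdim_ge : dimH C ≤ dimH (projTo J '' C) := by
    conv_lhs => rw [hCeq]
    apply dimH_image_le_of_locally_lipschitzOn
    intro y hy
    have hyP : y ∈ P := by rw [himg] at hy; exact hy.1
    have hcd : ContDiffAt ℝ 1 g y := by
      refine contDiffAt_pi.2 fun i => ?_
      refine (Real.contDiff_exp.contDiffAt).comp y ?_
      refine ContDiffAt.sum fun j _ => ?_
      refine ContDiffAt.mul contDiffAt_const ?_
      have hlog : ContDiffAt ℝ 1 Real.log (y j) :=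
        Real.contDiffAt_log.2 (ne_of_gt ((hP_mem y).1 hyP j))
      exact hlog.comp y ((ContinuousLinearMap.proj (j : J)
        : (J → ℝ) →L[ℝ] ℝ).contDiff.contDiffAt)
    obtain ⟨K, t, ht, hlip⟩ := hcd.exists_lipschitzOnWith
    exact ⟨K, t, mem_nhdsWithin_of_mem_nhds ht, hlip⟩
  have hdimC : dimH C = (J.card : ENNReal) :=
    le_antisymm (hdim_ge.trans hdimU.le) (hdimU ▸ hdim_le)
  have hk : J.card = k := by
    have h1 : (J.card : ENNReal) = (k : ENNReal) := hdimC.symm.trans hdim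
    exact_mod_cast h1
  exact ⟨J, hk, hinj, hopen, g, hgC, hg_id⟩
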